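/- For any finite ranked poset P, any subgroup G of Aut(P), and any x in P, the rank of the orbit [x]_G in the quotient poset P/G equals the rank of x in P. -/

import Mathlib

namespace PaperSCD

variable {β : Type*}

/-- `x` is covered by `y` with respect to the order relation `le`. -/
def Covers (le : β → β → Prop) (x y : β) : Prop :=
  le x y ∧ x ≠ y ∧ ∀ z, le x z → le z y → z = x ∨ z = y

/-- `r` is a rank function for the order `le`: covers raise rank by one and
minimal elements have rank zero. -/
def IsRankFn (le : β → β → Prop) (r : β → ℕ) : Prop :=
  (∀ x y, Covers le x y → r y = r x + 1) ∧ ∀ x, (∀ y, le y x → y = x) → r x = 0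

/-- `C` is a chain with respect to `le`. -/
def IsChn (le : β → β → Prop) (C : Set β) : Prop :=
  ∀ x ∈ C, ∀ y ∈ C, le x y ∨ le y x

/-- `x` is covered by `y` inside the subposet `S`. -/
def CoversIn (le : β → β → Prop) (S : Set β) (x y : β) : Prop :=
  x ∈ S ∧ y ∈ S ∧ le x y ∧ x ≠ y ∧ ∀ z ∈ S, le x z → le z y → z = x ∨ z = y

/-- The chain `C` is saturated in the ambient order: consecutive elements of `C`
are covers in the ambient order. -/
def SatChn (le : β → β → Prop) (C : Set β) : Prop :=
  ∀ x ∈ C, ∀ y ∈ C, CoversIn le C x y → Covers le x y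

/-- `C` is a nonempty saturated chain which is symmetric for rank function `r`
in a poset of rank `R`. -/
def IsSymmSatChain (le : β → β → Prop) (r : β → ℕ) (R : ℕ) (C : Set β) : Prop :=
  C.Nonempty ∧ IsChn le C ∧ SatChn le C ∧
    ∃ a ∈ C, ∃ b ∈ C, (∀ x ∈ C, le a x ∧ le x b) ∧ r a + r b = R

/-- `𝒟` is a symmetric chain decomposition. -/
def IsSCD (le : β → β → Prop) (r : β → ℕ) (R : ℕ) (𝒟 : Set (Set β)) : Prop :=
  (∀ C ∈ 𝒟, IsSymmSatChain le r R C) ∧ ∀ x : β, ∃! C, C ∈ 𝒟 ∧ x ∈ C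

/-- The order `le` is a symmetric chain order. -/
def IsSCO (le : β → β → Prop) : Prop :=
  ∃ (r : β → ℕ) (R : ℕ) (𝒟 : Set (Set β)),
    IsRankFn le r ∧ (∀ x, r x ≤ R) ∧ (Nonempty β → ∃ x, r x = R) ∧ IsSCD le r R 𝒟

/-- The quotient order on `Quot rel`: `[x] ≤ [y]` iff some representatives are comparable. -/
def qle (rel : β → β → Prop) (le : β → β → Prop) (a b : Quot rel) : Prop :=
  ∃ x y : β, Quot.mk rel x = a ∧ Quot.mk rel y = b ∧ le x y

/-- The permutation `(i, r) ↦ (ρ_r i, τ r)` of `[k] × [t]`. -/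
def wrPerm {k t : ℕ} (ρ : Fin t → Equiv.Perm (Fin k)) (τ : Equiv.Perm (Fin t)) :
    Equiv.Perm (Fin k × Fin t) where
  toFun p := (ρ p.2 p.1, τ p.2)
  invFun p := ((ρ (τ.symm p.2)).symm p.1, τ.symm p.2)
  left_inv := by rintro ⟨i, r⟩; simp
  right_inv := by rintro ⟨i, r⟩; simp

/-- The wreath product `K ≀ T` as a set of permutations of `[k] × [t]`. -/
def wreathSet {k t : ℕ} (K : Subgroup (Equiv.Perm (Fin k))) (T : Subgroup (Equiv.Perm (Fin t))) :
    Set (Equiv.Perm (Fin k × Fin t)) :=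
  { φ | ∃ ρ τ, (∀ r, ρ r ∈ K) ∧ τ ∈ T ∧ φ = wrPerm ρ τ }

/-- A subgroup of a permutation group is generated by powers of pairwise disjoint cycles. -/
def GenByPowersOfDisjointCycles {α : Type*} (T : Subgroup (Equiv.Perm α)) : Prop :=
  ∃ (m : ℕ) (σ : Fin m → Equiv.Perm α) (e : Fin m → ℕ),
    (∀ i, (σ i).IsCycle) ∧ (∀ i j, i ≠ j → (σ i).Disjoint (σ j)) ∧
    T = Subgroup.closure (Set.range fun i => σ i ^ e i)

/-- The `r`-th column of a subset of `[k] × [t]`, identified with a subset of `[k]`. -/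
def col {k t : ℕ} (X : Finset (Fin k × Fin t)) (r : Fin t) : Finset (Fin k) :=
  (X.filter fun p => p.2 = r).image Prod.fst

/-- Orbit relation of `K ≤ S_k` on subsets of `[k]`. -/
def relK {k : ℕ} (K : Subgroup (Equiv.Perm (Fin k))) :
    Finset (Fin k) → Finset (Fin k) → Prop :=
  fun A B => ∃ g ∈ K, A.image ⇑g = B

/-- Orbit relation of the wreath product `K ≀ T` on subsets of `[k] × [t]`. -/
def relW {k t : ℕ} (K : Subgroup (Equiv.Perm (Fin k))) (T : Subgroup (Equiv.Perm (Fin t))) :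
    Finset (Fin k × Fin t) → Finset (Fin k × Fin t) → Prop :=
  fun X Y => ∃ φ ∈ wreathSet K T, X.image ⇑φ = Y

/-- The rank (cardinality of a representative) on `B_k/K`. -/
def qrank {k : ℕ} (K : Subgroup (Equiv.Perm (Fin k))) : Quot (relK K) → ℕ :=
  Quot.lift Finset.card (by
    rintro A B ⟨g, -, rfl⟩
    exact (Finset.card_image_of_injective A g.injective).symm)

/-- The coordinate-permuting action `σ • f = f ∘ σ⁻¹`. -/
def actF {n : ℕ} {γ : Type*} (σ : Equiv.Perm (Fin n)) (f : Fin n → γ) : Fin n → γ :=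
  fun i => f (σ.symm i)

/-- `τ` stabilizes `j̄` under the coordinate-permuting action. -/
def ActStab {t s : ℕ} (τ : Equiv.Perm (Fin t)) (j : Fin t → Fin s) : Prop :=
  ∀ r, j (τ.symm r) = j r

end PaperSCD
open PaperSCD

/-- Orbit relation of a subgroup of automorphisms on the points. -/
def orbRel {β : Type*} (G : Subgroup (Equiv.Perm β)) : β → β → Prop :=
  fun x y => ∃ g ∈ G, g x = y

/-- There is a strictly increasing chain of length `n` (w.r.t. `lt`) ending at `x`. -/
def HasChainTo {γ : Type*} (lt : γ → γ → Prop) (x : γ) (n : ℕ) : Prop :=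
  ∃ f : Fin (n + 1) → γ, f (Fin.last n) = x ∧ ∀ i : Fin n, lt (f i.castSucc) (f i.succ)

lemma chain_extend {γ : Type*} {lt : γ → γ → Prop} {x y : γ} {n : ℕ}
    (h : HasChainTo lt x n) (hxy : lt x y) : HasChainTo lt y (n + 1) := by
  obtain ⟨f, hlast, hstep⟩ := h
  refine ⟨Fin.snoc f y, Fin.snoc_last _ _, ?_⟩
  intro i
  refine Fin.lastCases ?_ ?_ i
  · simpa [Fin.succ_last, hlast] using hxy
  · intro j
    have h1 : (j.castSucc).succ = (j.succ).castSucc := Fin.succ_castSucc j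
    rw [h1, Fin.snoc_castSucc, Fin.snoc_castSucc]
    exact hstep j

lemma chain_map {γ δ : Type*} {lt : γ → γ → Prop} {lt' : δ → δ → Prop} (F : γ → δ)
    (hF : ∀ a b, lt a b → lt' (F a) (F b)) {x : γ} {n : ℕ}
    (h : HasChainTo lt x n) : HasChainTo lt' (F x) n := by
  obtain ⟨f, hlast, hstep⟩ := h
  exact ⟨F ∘ f, by simp [hlast], fun i => hF _ _ (hstep i)⟩

lemma orbRel_equiv {β : Type*} (G : Subgroup (Equiv.Perm β)) : Equivalence (orbRel G) where
  refl x := ⟨1, G.one_mem, rfl⟩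
  symm := by rintro x y ⟨g, hg, rfl⟩; exact ⟨g⁻¹, G.inv_mem hg, g.symm_apply_apply x⟩
  trans := by
    rintro x y z ⟨g, hg, rfl⟩ ⟨h, hh, rfl⟩
    exact ⟨h * g, G.mul_mem hh hg, rfl⟩

lemma orbRel_of_mk_eq {β : Type*} (G : Subgroup (Equiv.Perm β)) {a b : β}
    (h : Quot.mk (orbRel G) a = Quot.mk (orbRel G) b) : orbRel G a b :=
  ((orbRel_equiv G).eqvGen_iff).mp (Quot.eq.mp h)

/-- For a finite ranked poset `P`, a subgroup `G` of `Aut(P)` with ranked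
quotient `P/G`, the rank of the orbit `[x]` in `P/G` (longest chain ending at `[x]`)
equals the rank of `x` in `P`. -/
theorem stmt_2 {β : Type*} [Fintype β] [PartialOrder β] (G : Subgroup (Equiv.Perm β))
    (hord : ∀ g ∈ G, ∀ x y : β, x ≤ y ↔ g x ≤ g y)
    (hranked : ∃ ρ : β → ℕ, IsRankFn (· ≤ ·) ρ)
    (hranked' : ∃ ρ' : Quot (orbRel G) → ℕ, IsRankFn (qle (orbRel G) (· ≤ ·)) ρ')
    (r : β → ℕ)
    (hr : ∀ x : β, IsGreatest {n | HasChainTo (· < ·) x n} (r x))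
    (r' : Quot (orbRel G) → ℕ)
    (hr' : ∀ a, IsGreatest
      {n | HasChainTo (fun a b => qle (orbRel G) (· ≤ ·) a b ∧ a ≠ b) a n} (r' a))
    (x : β) :
    r' (Quot.mk (orbRel G) x) = r x := by
  clear hranked hranked'
  -- automorphisms are strictly monotone
  have hmono : ∀ g ∈ G, ∀ a b : β, a < b → g a < g b := by
    intro g hg a b hab
    exact lt_of_le_of_ne ((hord g hg a b).mp hab.le)
      (fun he => hab.ne (g.injective he))
  -- automorphisms preserve rank
  have hrinv : ∀ g ∈ G, ∀ a : β, r (g a) = r a := by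
    have key : ∀ g ∈ G, ∀ a : β, r a ≤ r (g a) := by
      intro g hg a
      exact (hr (g a)).2 (chain_map g (hmono g hg) (hr a).1)
    intro g hg a
    refine le_antisymm ?_ (key g hg a)
    have := key g⁻¹ (G.inv_mem hg) (g a)
    simpa [Equiv.Perm.inv_def] using this
  -- x < y implies [x] ≠ [y]
  have hne : ∀ a b : β, a < b → Quot.mk (orbRel G) a ≠ Quot.mk (orbRel G) b := by
    intro a b hab he
    obtain ⟨g, hg, rfl⟩ := orbRel_of_mk_eq G he
    have h1 : r (g a) = r a := hrinv g hg a
    have h2 : r a + 1 ≤ r (g a) := (hr (g a)).2 (chain_extend (hr a).1 hab)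
    omega
  set qlt : Quot (orbRel G) → Quot (orbRel G) → Prop :=
    fun a b => qle (orbRel G) (· ≤ ·) a b ∧ a ≠ b with hqlt
  -- lifting chains from the quotient
  have hlift : ∀ n : ℕ, ∀ a : β, HasChainTo qlt (Quot.mk (orbRel G) a) n →
      HasChainTo (· < ·) a n := by
    intro n
    induction n with
    | zero => intro a _; exact ⟨fun _ => a, rfl, fun i => i.elim0⟩
    | succ n ih =>
      intro a h
      obtain ⟨f, hlast, hstep⟩ := h
      -- the last step
      have hstepL := hstep (Fin.last n)
      rw [Fin.succ_last, hlast] at hstepL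
      obtain ⟨⟨u, v, hu, hv, huv⟩, hne'⟩ := hstepL
      obtain ⟨g, hg, hgv⟩ := orbRel_of_mk_eq G hv
      -- b := g u is a representative of the previous class, b < a
      have hba : g u < a := by
        refine lt_of_le_of_ne ?_ ?_
        · rw [← hgv]; exact (hord g hg u v).mp huv
        · intro he
          apply hne'
          calc f (Fin.last n).castSucc = Quot.mk (orbRel G) u := hu.symm
            _ = Quot.mk (orbRel G) (g u) := Quot.sound ⟨g, hg, rfl⟩
            _ = Quot.mk (orbRel G) a := by rw [he]
      have hmk : f (Fin.last n).castSucc = Quot.mk (orbRel G) (g u) := by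
        rw [← hu]; exact Quot.sound ⟨g, hg, rfl⟩
      have hchain : HasChainTo qlt (Quot.mk (orbRel G) (g u)) n := by
        refine ⟨fun i => f i.castSucc, by rw [← hmk], fun i => ?_⟩
        have := hstep i.castSucc
        rwa [Fin.succ_castSucc] at this
      exact chain_extend (ih (g u) hchain) hba
  -- strict comparability descends to the quotient
  have hpush : ∀ a b : β, a < b → qlt (Quot.mk (orbRel G) a) (Quot.mk (orbRel G) b) := by
    intro a b hab
    exact ⟨⟨a, b, rfl, rfl, hab.le⟩, hne a b hab⟩
  refine le_antisymm ?_ ?_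
  · exact (hr x).2 (hlift _ x (hr' (Quot.mk (orbRel G) x)).1)
  · exact (hr' (Quot.mk (orbRel G) x)).2
      (chain_map (Quot.mk (orbRel G)) hpush (hr x).1)
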